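/- The group G generated by two elements a, b subject to the relations a^3 = b^3 = (ab)^3 = 1 is infinite. -/

import Mathlib

/-- The relators `a^3, b^3, (ab)^3` in the free group on two generators. -/
def rels2 : Set (FreeGroup (Fin 2)) :=
  {(FreeGroup.of 0) ^ 3, (FreeGroup.of 1) ^ 3, (FreeGroup.of 0 * FreeGroup.of 1) ^ 3}

noncomputable section AuxStmt2

/-- A primitive cube root of unity in `ℂ`. -/
def ω : ℂ := (-1 + Real.sqrt 3 * Complex.I) / 2

lemma hω : ω ^ 2 + ω + 1 = 0 := by
  have h3 : ((Real.sqrt 3 : ℝ) : ℂ) ^ 2 = 3 := by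
    norm_cast
    rw [Real.sq_sqrt] <;> norm_num
  have h3' : ((Real.sqrt 3 : ℝ) : ℂ) ^ 2 * Complex.I ^ 2 = -3 := by
    rw [h3, Complex.I_sq]; ring
  unfold ω
  linear_combination (1/4 : ℂ) * h3'

lemma hω3 : ω ^ 3 = 1 := by linear_combination (ω - 1) * hω

lemma hω0 : ω ≠ 0 := by
  intro h
  have := hω
  rw [h] at this
  norm_num at this

/-- The affine map `z ↦ u z + v` as a permutation of `ℂ`, for `u ≠ 0`. -/
def aff (u v : ℂ) (hu : u ≠ 0) : Equiv.Perm ℂ where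
  toFun z := u * z + v
  invFun z := (z - v) / u
  left_inv z := by field_simp; ring
  right_inv z := by field_simp; ring

lemma aff_apply (u v : ℂ) (hu : u ≠ 0) (z : ℂ) : aff u v hu z = u * z + v := rfl

def fStmt2 : Fin 2 → Equiv.Perm ℂ := ![aff ω 0 hω0, aff ω 1 hω0]

lemma rels_hold : ∀ r ∈ rels2, FreeGroup.lift fStmt2 r = 1 := by
  intro r hr
  rcases hr with h | h | h <;> subst h <;>
    simp only [map_pow, map_mul, FreeGroup.lift_apply_of] <;>
    ext z <;>
    simp only [fStmt2, Matrix.cons_val_zero, Matrix.cons_val_one, Matrix.head_cons,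
      pow_succ, pow_zero, one_mul, Equiv.Perm.mul_apply, aff_apply, Equiv.Perm.one_apply]
  · linear_combination z * hω3
  · linear_combination z * hω3 + hω
  · linear_combination z * (ω ^ 3 + 1) * hω3 + (ω * (ω ^ 2 - ω + 1)) * hω

def φStmt2 : PresentedGroup rels2 →* Equiv.Perm ℂ := PresentedGroup.toGroup rels_hold

end AuxStmt2

/-- The group `⟨a, b | a^3 = b^3 = (ab)^3 = 1⟩` is infinite. -/
theorem stmt_2 : Infinite (PresentedGroup rels2) := by
  set g : PresentedGroup rels2 := (PresentedGroup.of 0)⁻¹ * PresentedGroup.of 1 with hg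
  have key : ∀ n : ℕ, (φStmt2 (g ^ n)) 0 = (n : ℂ) * ω⁻¹ := by
    intro n
    have hφg : ∀ z : ℂ, (φStmt2 g) z = z + ω⁻¹ := by
      intro z
      have hof : ∀ x : Fin 2, φStmt2 (PresentedGroup.of x) = fStmt2 x := fun x =>
        PresentedGroup.toGroup.of rels_hold
      rw [hg, map_mul, map_inv, hof, hof]
      show ((fStmt2 0)⁻¹ : Equiv.Perm ℂ) ((fStmt2 1) z) = z + ω⁻¹
      simp only [fStmt2, Matrix.cons_val_zero, Matrix.cons_val_one, Matrix.head_cons]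
      show (((ω * z + 1) - 0) / ω) = z + ω⁻¹
      field_simp [hω0]
      ring
    induction n with
    | zero => simp
    | succ n ih =>
      rw [pow_succ', map_mul, Equiv.Perm.mul_apply, hφg, ih]
      push_cast
      ring
  have hinj : Function.Injective (fun n : ℕ => g ^ n) := by
    intro m n h
    simp only at h
    have := congrArg (fun x => (φStmt2 x) 0) h
    simp only [key] at this
    have hω0' : (ω⁻¹ : ℂ) ≠ 0 := inv_ne_zero hω0
    have := mul_right_cancel₀ hω0' this
    exact_mod_cast this
  exact Infinite.of_injective _ hinj
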